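/- Let H be a real Hilbert space and T : H → H a bounded linear operator that is self-adjoint, positive semidefinite, non-expansive (‖T‖ ≤ 1), such that 1 belongs to the spectrum of T but 1 is not an eigenvalue of T. Then ‖(I − T + T^n)^{-1}‖ → ∞ as n → ∞. -/

import Mathlib

open Filter
open scoped RealInnerProductSpace

/-- Cauchy–Schwarz-free operator inequality: if `A` is symmetric with
`0 ≤ ⟪A x, x⟫ ≤ ‖x‖²` for all `x`, then `‖A x‖² ≤ ⟪A x, x⟫`. -/
lemma aux_sq_le_inner {H : Type*} [NormedAddCommGroup H] [InnerProductSpace ℝ H]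
    (A : H →L[ℝ] H) (hA : ∀ x y : H, ⟪A x, y⟫ = ⟪x, A y⟫)
    (h0 : ∀ x : H, 0 ≤ ⟪A x, x⟫) (h1 : ∀ x : H, ⟪A x, x⟫ ≤ ‖x‖ ^ 2) (x : H) :
    ‖A x‖ ^ 2 ≤ ⟪A x, x⟫ := by
  have e2 : ⟪A (A x), x⟫ = ⟪A x, A x⟫ := hA (A x) x
  have e1 : ⟪A (x - A x), x - A x⟫
      = ⟪A x, x⟫ - 2 * ⟪A x, A x⟫ + ⟪A (A x), A x⟫ := by
    rw [map_sub, inner_sub_left, inner_sub_right, inner_sub_right, e2]; ring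
  have h2 := h0 (x - A x)
  have h3 := h1 (A x)
  have h4 : ⟪A x, A x⟫ = ‖A x‖ ^ 2 := real_inner_self_eq_norm_sq _
  rw [e1] at h2
  linarith

set_option maxHeartbeats 2000000 in
/-- Second limit of the discrepancy principle (Theorem 2.7) for the family
`B_n = T - T^n`: if `1` lies in the spectrum of `T` but is not an eigenvalue,
then the stability constants `‖(I - T + T^n)⁻¹‖` blow up. -/
theorem stmt_9
    {H : Type*} [NormedAddCommGroup H] [InnerProductSpace ℝ H] [CompleteSpace H]
    (T : H →L[ℝ] H)
    (hsa : ∀ x y : H, ⟪T x, y⟫ = ⟪x, T y⟫)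
    (hpos : ∀ x : H, 0 ≤ ⟪T x, x⟫)
    (hne : ‖T‖ ≤ 1)
    (hspec : (1 : ℝ) ∈ spectrum ℝ T)
    (hev : ∀ x : H, T x = x → x = 0) :
    Tendsto (fun n : ℕ => ‖Ring.inverse ((1 : H →L[ℝ] H) - T + T ^ n)‖)
      atTop atTop := by
  -- `1 - T` is not a unit
  have hSnotunit : ¬ IsUnit ((1 : H →L[ℝ] H) - T) := by
    have := spectrum.mem_iff.mp hspec
    rwa [map_one] at this
  -- basic facts
  have hTle : ∀ x : H, ‖T x‖ ≤ ‖x‖ := fun x =>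
    (T.le_opNorm x).trans (by nlinarith [norm_nonneg x])
  have hT1 : ∀ x : H, ⟪T x, x⟫ ≤ ‖x‖ ^ 2 := fun x =>
    (real_inner_le_norm _ _).trans (by nlinarith [hTle x, norm_nonneg x])
  have hTnle : ∀ (n : ℕ) (x : H), ‖(T ^ n) x‖ ≤ ‖x‖ := by
    intro n
    induction n with
    | zero => intro x; simp
    | succ n ih =>
      intro x
      rw [pow_succ, ContinuousLinearMap.mul_apply]
      exact (ih (T x)).trans (hTle x)
  have hpow_sym : ∀ (n : ℕ) (x y : H), ⟪(T ^ n) x, y⟫ = ⟪x, (T ^ n) y⟫ := by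
    intro n
    induction n with
    | zero => intro x y; simp
    | succ n ih =>
      intro x y
      calc ⟪(T ^ (n + 1)) x, y⟫ = ⟪(T ^ n) (T x), y⟫ := by
            rw [pow_succ, ContinuousLinearMap.mul_apply]
        _ = ⟪T x, (T ^ n) y⟫ := ih (T x) y
        _ = ⟪x, T ((T ^ n) y)⟫ := hsa x _
        _ = ⟪x, (T ^ (n + 1)) y⟫ := by rw [pow_succ', ContinuousLinearMap.mul_apply]
  have hyy : ∀ (x : H) (j k : ℕ), ⟪(T ^ j) x, (T ^ k) x⟫ = ⟪(T ^ (j + k)) x, x⟫ := by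
    intro x j k
    rw [← hpow_sym k ((T ^ j) x) x, ← ContinuousLinearMap.mul_apply, ← pow_add,
      Nat.add_comm k j]
  have hpow_pos : ∀ (n : ℕ) (x : H), 0 ≤ ⟪(T ^ n) x, x⟫ := by
    intro n x
    rcases Nat.even_or_odd n with ⟨k, hk⟩ | ⟨k, hk⟩
    · subst hk
      rw [← hyy]
      exact real_inner_self_nonneg
    · subst hk
      have h2 : 2 * k + 1 = k + (k + 1) := by ring
      rw [h2, pow_add, ContinuousLinearMap.mul_apply, hpow_sym, pow_succ',
        ContinuousLinearMap.mul_apply]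
      exact hpos _
  have hT5 : ∀ x : H, ‖T x‖ ^ 2 ≤ ⟪T x, x⟫ := aux_sq_le_inner T hsa hpos hT1
  -- the moments are antitone
  have hm_anti : ∀ (x : H) (n : ℕ), ⟪(T ^ (n + 1)) x, x⟫ ≤ ⟪(T ^ n) x, x⟫ := by
    intro x n
    rcases Nat.even_or_odd n with ⟨k, hk⟩ | ⟨k, hk⟩
    · subst hk
      have h2 : k + k + 1 = k + (k + 1) := by ring
      have hl : ⟪(T ^ (k + k + 1)) x, x⟫ = ⟪T ((T ^ k) x), (T ^ k) x⟫ := by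
        rw [h2, pow_add, ContinuousLinearMap.mul_apply, hpow_sym, pow_succ',
          ContinuousLinearMap.mul_apply]
      have hr : ⟪(T ^ (k + k)) x, x⟫ = ⟪(T ^ k) x, (T ^ k) x⟫ := (hyy x k k).symm
      rw [hl, hr, real_inner_self_eq_norm_sq]
      exact hT1 _
    · subst hk
      have h2 : 2 * k + 1 + 1 = (k + 1) + (k + 1) := by ring
      have hl : ⟪(T ^ (2 * k + 1 + 1)) x, x⟫ = ‖(T ^ (k + 1)) x‖ ^ 2 := by
        rw [h2, ← hyy, real_inner_self_eq_norm_sq]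
      have h3 : 2 * k + 1 = k + (k + 1) := by ring
      have hr : ⟪(T ^ (2 * k + 1)) x, x⟫ = ⟪T ((T ^ k) x), (T ^ k) x⟫ := by
        rw [h3, pow_add, ContinuousLinearMap.mul_apply, hpow_sym, pow_succ',
          ContinuousLinearMap.mul_apply]
      have h4 : (T ^ (k + 1)) x = T ((T ^ k) x) := by
        rw [pow_succ', ContinuousLinearMap.mul_apply]
      rw [hl, hr, h4]
      exact hT5 _
  -- the moments tend to zero
  have hm_tendsto : ∀ x : H, Tendsto (fun n : ℕ => ⟪(T ^ n) x, x⟫) atTop (nhds 0) := by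
    intro x
    set m : ℕ → ℝ := fun n => ⟪(T ^ n) x, x⟫ with hm
    have hanti : Antitone m := antitone_nat_of_succ_le (hm_anti x)
    have hbdd : BddBelow (Set.range m) := ⟨0, by rintro _ ⟨n, rfl⟩; exact hpow_pos n x⟩
    have hL : Tendsto m atTop (nhds (⨅ n, m n)) := tendsto_atTop_ciInf hanti hbdd
    have hLle : ∀ n, (⨅ n, m n) ≤ m n := fun n => ciInf_le hbdd n
    have hnormsq : ∀ k : ℕ, ‖(T ^ k) x‖ ^ 2 = m (k + k) := fun k => by
      rw [← real_inner_self_eq_norm_sq, hyy]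
    have hCauchy : CauchySeq fun k : ℕ => (T ^ k) x := by
      rw [Metric.cauchySeq_iff]
      intro ε hε
      have hε2 : 0 < ε ^ 2 / 2 := by positivity
      obtain ⟨N, hN⟩ := (Metric.tendsto_atTop.mp hL (ε ^ 2 / 2) hε2)
      refine ⟨N, fun j hj k hk => ?_⟩
      have key : ‖(T ^ j) x - (T ^ k) x‖ ^ 2 = m (j + j) - 2 * m (j + k) + m (k + k) := by
        rw [norm_sub_sq_real, hnormsq, hnormsq, hyy]
      have h1 : m (j + j) ≤ m N := hanti (by omega)
      have h2 : m (k + k) ≤ m N := hanti (by omega)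
      have h3 : (⨅ n, m n) ≤ m (j + k) := hLle _
      have hNd := hN N le_rfl
      rw [Real.dist_eq, abs_of_nonneg (by linarith [hLle N])] at hNd
      rw [dist_eq_norm]
      refine lt_of_pow_lt_pow_left₀ 2 hε.le ?_
      calc ‖(T ^ j) x - (T ^ k) x‖ ^ 2 = m (j + j) - 2 * m (j + k) + m (k + k) := key
        _ < ε ^ 2 := by linarith
    obtain ⟨z, hz⟩ := cauchySeq_tendsto_of_complete hCauchy
    have hz1 : Tendsto (fun k : ℕ => (T ^ (k + 1)) x) atTop (nhds z) :=
      hz.comp (tendsto_add_atTop_nat 1)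
    have hz2 : Tendsto (fun k : ℕ => T ((T ^ k) x)) atTop (nhds (T z)) :=
      (T.continuous.tendsto z).comp hz
    have hfix : T z = z := by
      refine tendsto_nhds_unique ?_ hz1
      convert hz2 using 2 with k
      rw [pow_succ', ContinuousLinearMap.mul_apply]
    have hz0 : z = 0 := hev z hfix
    have h2k : Tendsto (fun k : ℕ => m (k + k)) atTop (nhds 0) := by
      have he : (fun k : ℕ => m (k + k)) = fun k => ‖(T ^ k) x‖ ^ 2 :=
        funext fun k => (hnormsq k).symm
      rw [he]
      have := (hz.norm).pow 2
      rw [hz0, norm_zero] at this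
      simpa using this
    have hLzero : (⨅ n, m n) = 0 := by
      have hle0 : (⨅ n, m n) ≤ 0 :=
        ge_of_tendsto h2k (Filter.Eventually.of_forall fun k => hLle (k + k))
      have h0le : 0 ≤ (⨅ n, m n) := le_ciInf fun n => hpow_pos n x
      linarith
    rwa [hLzero] at hL
  -- symmetry, positivity and boundedness of `A n = 1 - T + T ^ n`
  set A : ℕ → H →L[ℝ] H := fun n => (1 : H →L[ℝ] H) - T + T ^ n with hA
  have hAapp : ∀ (n : ℕ) (x : H), (A n) x = x - T x + (T ^ n) x := fun n x => rfl
  have hAinner : ∀ (n : ℕ) (x : H),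
      ⟪(A n) x, x⟫ = (⟪x, x⟫ - ⟪T x, x⟫) + ⟪(T ^ n) x, x⟫ := by
    intro n x
    rw [hAapp, inner_add_left, inner_sub_left]
  have hS0 : ∀ x : H, 0 ≤ ⟪x, x⟫ - ⟪T x, x⟫ := fun x => by
    have := hT1 x
    rw [real_inner_self_eq_norm_sq]
    linarith
  have hTn1 : ∀ (n : ℕ) (x : H), ⟪(T ^ n) x, x⟫ ≤ ‖x‖ ^ 2 := fun n x =>
    (real_inner_le_norm _ _).trans (by nlinarith [hTnle n x, norm_nonneg x])
  -- telescoping estimate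
  have htel : ∀ (n : ℕ) (x : H), ‖(T ^ n) x - x‖ ≤ n * ‖T x - x‖ := by
    intro n x
    induction n with
    | zero => simp
    | succ n ih =>
      have hid : (T ^ (n + 1)) x - x = (T ^ n) (T x - x) + ((T ^ n) x - x) := by
        rw [map_sub, pow_succ, ContinuousLinearMap.mul_apply]
        abel
      rw [hid]
      calc ‖(T ^ n) (T x - x) + ((T ^ n) x - x)‖
          ≤ ‖(T ^ n) (T x - x)‖ + ‖(T ^ n) x - x‖ := norm_add_le _ _
        _ ≤ ‖T x - x‖ + n * ‖T x - x‖ := add_le_add (hTnle n _) ih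
        _ = (n + 1 : ℕ) * ‖T x - x‖ := by push_cast; ring
  -- every `A n` is a unit
  have hunit : ∀ n : ℕ, IsUnit (A n) := by
    intro n
    set c : ℝ := (1 / (2 * ((n : ℝ) + 1))) ^ 2 with hc
    have hcpos : 0 < c := by positivity
    refine ContinuousLinearMap.isUnit_of_forall_le_norm_inner_map (A n) (c := ⟨c, hcpos.le⟩)
      (by exact_mod_cast hcpos) fun x => ?_
    show ‖x‖ ^ 2 * c ≤ ‖⟪(A n) x, x⟫‖
    have hv0 : 0 ≤ ⟪(A n) x, x⟫ := by
      rw [hAinner]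
      have := hS0 x
      have := hpow_pos n x
      linarith
    rw [Real.norm_eq_abs, abs_of_nonneg hv0]
    by_contra hcon
    push_neg at hcon
    -- notation
    set v : ℝ := ⟪(A n) x, x⟫ with hvdef
    set r : ℝ := ‖x‖ with hrdef
    have hrpos : 0 < r := by
      rcases eq_or_lt_of_le (norm_nonneg x) with h | h
      · exfalso
        rw [hrdef, ← h] at hcon
        simp at hcon
        exact absurd (lt_of_le_of_lt hv0 hcon) (lt_irrefl 0)
      · exact h
    -- the operator `S = 1 - T`
    set S : H →L[ℝ] H := (1 : H →L[ℝ] H) - T with hSdef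
    have hSapp : ∀ y : H, S y = y - T y := fun y => rfl
    have hSsym : ∀ y z : H, ⟪S y, z⟫ = ⟪y, S z⟫ := by
      intro y z
      rw [hSapp, hSapp, inner_sub_left, inner_sub_right, hsa]
    have hSpos : ∀ y : H, 0 ≤ ⟪S y, y⟫ := fun y => by
      rw [hSapp, inner_sub_left]; exact hS0 y
    have hS1 : ∀ y : H, ⟪S y, y⟫ ≤ ‖y‖ ^ 2 := fun y => by
      rw [hSapp, inner_sub_left, real_inner_self_eq_norm_sq]
      have := hpos y
      linarith
    have hS5 := aux_sq_le_inner S hSsym hSpos hS1 x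
    set s : ℝ := ‖S x‖ with hsdef
    have hvsplit : v = ⟪S x, x⟫ + ⟪(T ^ n) x, x⟫ := by
      rw [hvdef, hAinner, hSapp, inner_sub_left]
    -- s^2 ≤ v
    have hs2v : s ^ 2 ≤ v := by
      rw [hvsplit]
      have := hpow_pos n x
      linarith
    -- v ≥ r^2 - n * s * r
    have hTnlow : (r : ℝ) ^ 2 - (n : ℝ) * s * r ≤ ⟪(T ^ n) x, x⟫ := by
      have h1 : ⟪(T ^ n) x - x, x⟫ = ⟪(T ^ n) x, x⟫ - ⟪x, x⟫ := inner_sub_left _ _ _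
      have h2 : |⟪(T ^ n) x - x, x⟫| ≤ ‖(T ^ n) x - x‖ * ‖x‖ := abs_real_inner_le_norm _ _
      have h3 : ‖(T ^ n) x - x‖ ≤ (n : ℝ) * ‖T x - x‖ := htel n x
      have h4 : ‖T x - x‖ = s := by rw [hsdef, hSapp, norm_sub_rev]
      have h5 : ⟪x, x⟫ = r ^ 2 := by rw [real_inner_self_eq_norm_sq]
      have h6 := neg_abs_le ⟪(T ^ n) x - x, x⟫
      have h7 : ‖(T ^ n) x - x‖ * ‖x‖ ≤ (n : ℝ) * s * r := by
        rw [← h4]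
        exact mul_le_mul_of_nonneg_right h3 (norm_nonneg x)
      rw [h1, h5] at h6
      rw [← hrdef] at h7
      have := h2.trans h7
      linarith [neg_abs_le ⟪(T ^ n) x - x, x⟫, h6]
    have hv2 : r ^ 2 - (n : ℝ) * s * r ≤ v := by
      rw [hvsplit]
      have := hSpos x
      linarith
    -- from s^2 ≤ v < r^2 * c we get s < r / (2(n+1))
    have hsmall : s < r * (1 / (2 * ((n : ℝ) + 1))) := by
      refine lt_of_pow_lt_pow_left₀ 2 (by positivity) ?_
      calc s ^ 2 ≤ v := hs2v
        _ < r ^ 2 * c := hcon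
        _ = (r * (1 / (2 * ((n : ℝ) + 1)))) ^ 2 := by rw [hc]; ring
    -- contradiction
    have hn1 : (0 : ℝ) < (n : ℝ) + 1 := by positivity
    have hcle : c ≤ 1 / 4 := by
      rw [hc]
      rw [div_pow, one_pow]
      rw [div_le_div_iff₀ (by positivity) (by norm_num)]
      nlinarith [sq_nonneg ((n : ℝ) + 1), Nat.cast_nonneg (α := ℝ) n]
    have hbig : (n : ℝ) * s * r ≤ r ^ 2 / 2 := by
      have h8 : (n : ℝ) * s ≤ (n : ℝ) * (r * (1 / (2 * ((n : ℝ) + 1)))) :=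
        mul_le_mul_of_nonneg_left hsmall.le (Nat.cast_nonneg n)
      have h9 : (n : ℝ) * (r * (1 / (2 * ((n : ℝ) + 1)))) ≤ r / 2 := by
        rw [mul_one_div, ← mul_div_assoc]
        rw [div_le_div_iff₀ (by positivity) (by norm_num)]
        nlinarith [hrpos.le, Nat.cast_nonneg (α := ℝ) n]
      calc (n : ℝ) * s * r ≤ (r / 2) * r :=
            mul_le_mul_of_nonneg_right (h8.trans h9) hrpos.le
        _ = r ^ 2 / 2 := by ring
    have : v < r ^ 2 * (1 / 4) :=
      lt_of_lt_of_le hcon (mul_le_mul_of_nonneg_left hcle (by positivity))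
    nlinarith
  -- existence of a good unit vector for each ε > 0
  have hgood : ∀ ε : ℝ, 0 < ε → ∃ u : H, ‖u‖ = 1 ∧ ⟪u, u⟫ - ⟪T u, u⟫ < ε := by
    intro ε hε
    by_contra hcontra
    push_neg at hcontra
    apply hSnotunit
    refine ContinuousLinearMap.isUnit_of_forall_le_norm_inner_map _ (c := ⟨ε, hε.le⟩)
      (by exact_mod_cast hε) fun x => ?_
    show ‖x‖ ^ 2 * ε ≤ ‖⟪((1 : H →L[ℝ] H) - T) x, x⟫‖
    have happ : ⟪((1 : H →L[ℝ] H) - T) x, x⟫ = ⟪x, x⟫ - ⟪T x, x⟫ := by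
      rw [ContinuousLinearMap.sub_apply, ContinuousLinearMap.one_apply, inner_sub_left]
    rcases eq_or_ne x 0 with rfl | hx
    · simp
    · have hxpos : 0 < ‖x‖ := norm_pos_iff.mpr hx
      set u : H := ‖x‖⁻¹ • x with hu
      have hun : ‖u‖ = 1 := by
        rw [hu, norm_smul, norm_inv, norm_norm, inv_mul_cancel₀ hxpos.ne']
      have hscale : ⟪u, u⟫ - ⟪T u, u⟫ = ‖x‖⁻¹ ^ 2 * (⟪x, x⟫ - ⟪T x, x⟫) := by
        rw [hu, map_smul, real_inner_smul_left, real_inner_smul_left,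
          real_inner_smul_right, real_inner_smul_right]
        ring
      have hc := hcontra u hun
      rw [hscale] at hc
      rw [happ, Real.norm_eq_abs, abs_of_nonneg (hS0 x)]
      have h10 : ε * ‖x‖ ^ 2 ≤ ⟪x, x⟫ - ⟪T x, x⟫ := by
        have h11 : 0 < ‖x‖⁻¹ ^ 2 := by positivity
        rw [← mul_le_mul_iff_right₀ h11]
        calc ‖x‖⁻¹ ^ 2 * (ε * ‖x‖ ^ 2) = ε := by
              field_simp
          _ ≤ ‖x‖⁻¹ ^ 2 * (⟪x, x⟫ - ⟪T x, x⟫) := hc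
      linarith [h10]
  -- main argument
  rw [tendsto_atTop]
  intro K
  set K' : ℝ := max K 1 with hK'
  have hK'pos : 0 < K' := lt_of_lt_of_le one_pos (le_max_right _ _)
  set δ : ℝ := K'⁻¹ with hδ
  have hδpos : 0 < δ := by positivity
  set ε : ℝ := δ ^ 2 / 4 with hε
  have hεpos : 0 < ε := by positivity
  obtain ⟨u, hun, hSu⟩ := hgood ε hεpos
  have hbev : ∀ᶠ n : ℕ in atTop, ⟪(T ^ n) u, u⟫ < ε :=
    (hm_tendsto u).eventually (gt_mem_nhds hεpos)
  filter_upwards [hbev] with n hb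
  -- `A n` is a unit, with inverse of norm ≥ K'
  have hu := hunit n
  have hInv : Ring.inverse (A n) * A n = 1 := Ring.inverse_mul_cancel _ hu
  have hux : (Ring.inverse (A n)) ((A n) u) = u := by
    rw [← ContinuousLinearMap.mul_apply, hInv, ContinuousLinearMap.one_apply]
  -- bound `‖A n u‖ ≤ δ` via the quadratic form
  have hvsum : ⟪(A n) u, u⟫ = (⟪u, u⟫ - ⟪T u, u⟫) + ⟪(T ^ n) u, u⟫ := hAinner n u
  have hvlt : ⟪(A n) u, u⟫ < 2 * ε := by rw [hvsum]; linarith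
  -- apply the key lemma to `(2 : ℝ)⁻¹ • A n`
  set B : H →L[ℝ] H := (2 : ℝ)⁻¹ • A n with hB
  have hBapp : ∀ y : H, B y = (2 : ℝ)⁻¹ • (A n) y := fun y => rfl
  have hAsym : ∀ y z : H, ⟪(A n) y, z⟫ = ⟪y, (A n) z⟫ := by
    intro y z
    rw [hAapp, hAapp, inner_add_left, inner_add_right, inner_sub_left, inner_sub_right,
      hsa, hpow_sym]
  have hApos : ∀ y : H, 0 ≤ ⟪(A n) y, y⟫ := fun y => by
    rw [hAinner]
    have := hS0 y
    have := hpow_pos n y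
    linarith
  have hA1 : ∀ y : H, ⟪(A n) y, y⟫ ≤ 2 * ‖y‖ ^ 2 := fun y => by
    rw [hAinner]
    have h1 := hpos y
    have h2 := hTn1 n y
    have h3 : ⟪y, y⟫ = ‖y‖ ^ 2 := real_inner_self_eq_norm_sq y
    linarith
  have hBsym : ∀ y z : H, ⟪B y, z⟫ = ⟪y, B z⟫ := by
    intro y z
    rw [hBapp, hBapp, real_inner_smul_left, real_inner_smul_right, hAsym]
  have hBpos : ∀ y : H, 0 ≤ ⟪B y, y⟫ := fun y => by
    rw [hBapp, real_inner_smul_left]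
    have := hApos y
    linarith
  have hB1 : ∀ y : H, ⟪B y, y⟫ ≤ ‖y‖ ^ 2 := fun y => by
    rw [hBapp, real_inner_smul_left]
    have := hA1 y
    linarith
  have hB5 := aux_sq_le_inner B hBsym hBpos hB1 u
  have hBnorm : ‖B u‖ ^ 2 = (2 : ℝ)⁻¹ ^ 2 * ‖(A n) u‖ ^ 2 := by
    rw [hBapp, norm_smul, Real.norm_eq_abs]
    rw [mul_pow, sq_abs]
  have hBinner : ⟪B u, u⟫ = (2 : ℝ)⁻¹ * ⟪(A n) u, u⟫ := by
    rw [hBapp, real_inner_smul_left]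
  have hAu2 : ‖(A n) u‖ ^ 2 ≤ 2 * ⟪(A n) u, u⟫ := by
    rw [hBnorm, hBinner] at hB5
    linarith
  have hAuδ : ‖(A n) u‖ ≤ δ := by
    refine le_of_pow_le_pow_left₀ two_ne_zero hδpos.le ?_
    calc ‖(A n) u‖ ^ 2 ≤ 2 * ⟪(A n) u, u⟫ := hAu2
      _ ≤ 2 * (2 * ε) := by linarith
      _ = δ ^ 2 := by rw [hε]; ring
  -- conclude
  have hone : (1 : ℝ) ≤ ‖Ring.inverse (A n)‖ * ‖(A n) u‖ := by
    calc (1 : ℝ) = ‖u‖ := hun.symm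
      _ = ‖(Ring.inverse (A n)) ((A n) u)‖ := by rw [hux]
      _ ≤ ‖Ring.inverse (A n)‖ * ‖(A n) u‖ := ContinuousLinearMap.le_opNorm _ _
  have hKK : K' ≤ ‖Ring.inverse (A n)‖ := by
    have hδinv : δ⁻¹ = K' := by rw [hδ, inv_inv]
    have h12 : ‖Ring.inverse (A n)‖ * ‖(A n) u‖ ≤ ‖Ring.inverse (A n)‖ * δ := by
      exact mul_le_mul_of_nonneg_left hAuδ (norm_nonneg _)
    have h13 : (1 : ℝ) ≤ ‖Ring.inverse (A n)‖ * δ := hone.trans h12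
    calc K' = δ⁻¹ * 1 := by rw [hδinv, mul_one]
      _ ≤ δ⁻¹ * (‖Ring.inverse (A n)‖ * δ) :=
          mul_le_mul_of_nonneg_left h13 (by positivity)
      _ = ‖Ring.inverse (A n)‖ := by field_simp
  exact (le_max_left K 1).trans hKK
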